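/- For every K > 0 there exists ε_0 > 0 such that for all 0 < ε < ε_0 the following holds for F_ε(A) = S_1(A^{−1}) − ε S_n(A^{−1}) on positive definite Hermitian n×n matrices: if A_t, t ∈ [0,1], is a continuous path of positive definite Hermitian matrices with F_ε(A_t) < K for all t and S_1(A_0^{−1}) < K, then S_1(A_t^{−1}) < K + 1 for all t ∈ [0,1]. In particular, the connected component of the set {F_ε < K} containing the set {S_1(A^{−1}) < K} is contained in {S_1(A^{−1}) < K + 1}. -/

import Mathlib

open Matrix Polynomial Finset


/-- `S_k(A)` for an `n × n` matrix `A`: the `k`-th elementary symmetric function of the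
eigenvalues of `A`, i.e. the coefficient of `(-x)^(n-k)` in `det (A - x I)`. -/
noncomputable def SmatR (n : ℕ) (k : ℤ) (A : Matrix (Fin n) (Fin n) ℝ) : ℝ :=
  if 0 ≤ k ∧ k ≤ (n : ℤ) then (-1 : ℝ) ^ k.toNat * (Matrix.charpoly A).coeff (n - k.toNat)
  else 0

/-- `S_1(A⁻¹) = S_{n-1}(A)/S_n(A)`, the sum of the reciprocals of the eigenvalues of `A`. -/
noncomputable def S1inv (n : ℕ) (A : Matrix (Fin n) (Fin n) ℝ) : ℝ :=
  SmatR n ((n : ℤ) - 1) A / SmatR n (n : ℤ) A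

/-- `S_n(A⁻¹) = S_0(A)/S_n(A) = 1/det A`. -/
noncomputable def Sninv (n : ℕ) (A : Matrix (Fin n) (Fin n) ℝ) : ℝ :=
  SmatR n 0 A / SmatR n (n : ℤ) A

/-- The operator `F_ε(A) = S_1(A⁻¹) - ε S_n(A⁻¹)`. -/
noncomputable def Fe (n : ℕ) (ε : ℝ) (A : Matrix (Fin n) (Fin n) ℝ) : ℝ :=
  S1inv n A - ε * Sninv n A



lemma charpoly_conj {n : ℕ} (U V D : Matrix (Fin n) (Fin n) ℝ) (hUV : U * V = 1)
    (hVU : V * U = 1) : (U * D * V).charpoly = D.charpoly := by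
  have hmapUV : U.map C * V.map C = 1 := by
    rw [← Matrix.map_mul, hUV, Matrix.map_one _ (map_zero C) (map_one C)]
  have h1 : charmatrix (U * D * V) = U.map C * charmatrix D * V.map C := by
    unfold Matrix.charmatrix
    rw [mul_sub, sub_mul]
    congr 1
    · rw [← (Matrix.scalar_commute (X : ℝ[X]) (Commute.all X) (U.map C)).eq, mul_assoc, hmapUV,
        mul_one]
    · simp only [RingHom.mapMatrix_apply, Matrix.map_mul]
  unfold Matrix.charpoly
  rw [h1, det_mul, det_mul, mul_comm, ← mul_assoc, ← det_mul, ← Matrix.map_mul, hVU,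
    Matrix.map_one _ (map_zero C) (map_one C), det_one, one_mul]

lemma charpoly_diagonal {n : ℕ} (d : Fin n → ℝ) :
    (Matrix.diagonal d).charpoly = ∏ i, (X - C (d i)) := by
  have h : charmatrix (Matrix.diagonal d) = Matrix.diagonal fun i => (X : ℝ[X]) - C (d i) := by
    ext i j
    by_cases h : i = j
    · subst h; simp
    · simp [h, Matrix.diagonal_apply_ne _ h]
  rw [Matrix.charpoly, h, det_diagonal]

lemma charpoly_hermitian {n : ℕ} (A : Matrix (Fin n) (Fin n) ℝ) (hA : A.IsHermitian) :
    A.charpoly = ∏ i, (X - C (hA.eigenvalues i)) := by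
  have hspec := hA.spectral_theorem
  rw [RCLike.ofReal_real_eq_id, Function.id_comp] at hspec
  set U : Matrix (Fin n) (Fin n) ℝ := (hA.eigenvectorUnitary : Matrix (Fin n) (Fin n) ℝ) with hU
  have h1 : U * star U = 1 := Matrix.mem_unitaryGroup_iff.mp hA.eigenvectorUnitary.2
  have h2 : star U * U = 1 := Matrix.mem_unitaryGroup_iff'.mp hA.eigenvectorUnitary.2
  calc A.charpoly = (U * Matrix.diagonal hA.eigenvalues * star U).charpoly := by
        exact congrArg Matrix.charpoly hspec
    _ = (Matrix.diagonal hA.eigenvalues).charpoly := charpoly_conj U (star U) _ h1 h2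
    _ = ∏ i, (X - C (hA.eigenvalues i)) := _root_.charpoly_diagonal _

lemma coeff_zero_prod {n : ℕ} (d : Fin n → ℝ) :
    (∏ i, (X - C (d i))).coeff 0 = (-1 : ℝ) ^ n * ∏ i, d i := by
  rw [Polynomial.coeff_zero_eq_eval_zero, Polynomial.eval_prod]
  have : ∀ i : Fin n, Polynomial.eval 0 (X - C (d i)) = (-1) * d i := by intro i; simp
  rw [Finset.prod_congr rfl fun i _ => this i, Finset.prod_mul_distrib, Finset.prod_const,
    Finset.card_univ, Fintype.card_fin]

lemma derivative_finset_prod {ι} [DecidableEq ι] (s : Finset ι) (f : ι → ℝ[X]) :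
    Polynomial.derivative (∏ i ∈ s, f i) =
      ∑ i ∈ s, (∏ j ∈ s.erase i, f j) * Polynomial.derivative (f i) := by
  rw [Finset.prod_eq_multiset_prod, Polynomial.derivative_prod, Finset.sum_eq_multiset_sum]
  congr 1

lemma coeff_one_prod {n : ℕ} (d : Fin n → ℝ) (hn : 0 < n) :
    (∏ i, (X - C (d i))).coeff 1 =
      (-1 : ℝ) ^ (n - 1) * ∑ i : Fin n, ∏ j ∈ Finset.univ.erase i, d j := by
  have h : (∏ i, (X - C (d i))).coeff 1 =
      (Polynomial.derivative (∏ i : Fin n, (X - C (d i)))).coeff 0 := by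
    rw [Polynomial.coeff_derivative]; ring
  rw [h, derivative_finset_prod, Polynomial.coeff_zero_eq_eval_zero]
  simp only [Polynomial.derivative_sub, Polynomial.derivative_X, Polynomial.derivative_C,
    sub_zero, mul_one, Polynomial.eval_finset_sum, Polynomial.eval_prod, Polynomial.eval_sub,
    Polynomial.eval_X, Polynomial.eval_C, zero_sub]
  rw [Finset.mul_sum]
  refine Finset.sum_congr rfl fun i _ => ?_
  have hcard : (Finset.univ.erase i).card = n - 1 := by
    rw [Finset.card_erase_of_mem (Finset.mem_univ i), Finset.card_univ, Fintype.card_fin]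
  calc ∏ j ∈ Finset.univ.erase i, -d j
      = ∏ j ∈ Finset.univ.erase i, (-1) * d j := by simp
    _ = (-1 : ℝ) ^ (n - 1) * ∏ j ∈ Finset.univ.erase i, d j := by
        rw [Finset.prod_mul_distrib, Finset.prod_const, hcard]

lemma SmatR_top {n : ℕ} (A : Matrix (Fin n) (Fin n) ℝ) : SmatR n (n : ℤ) A = A.det := by
  unfold SmatR
  rw [if_pos ⟨Int.natCast_nonneg n, le_refl _⟩, Int.toNat_natCast, Nat.sub_self,
    Matrix.det_eq_sign_charpoly_coeff, Fintype.card_fin]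

lemma SmatR_bot {n : ℕ} (A : Matrix (Fin n) (Fin n) ℝ) : SmatR n 0 A = 1 := by
  unfold SmatR
  rw [if_pos ⟨le_refl _, Int.natCast_nonneg n⟩]
  have h1 : A.charpoly.natDegree = n := by
    rw [Matrix.charpoly_natDegree_eq_dim, Fintype.card_fin]
  simp only [Int.toNat_zero, pow_zero, Nat.sub_zero, one_mul]
  have h2 := (A.charpoly_monic).coeff_natDegree
  rw [h1] at h2
  exact h2

lemma Sninv_eq {n : ℕ} (A : Matrix (Fin n) (Fin n) ℝ) : Sninv n A = (A.det)⁻¹ := by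
  unfold Sninv
  rw [SmatR_bot, SmatR_top, one_div]

lemma det_posdef {n : ℕ} {A : Matrix (Fin n) (Fin n) ℝ} (hA : A.IsHermitian) :
    A.det = ∏ i, hA.eigenvalues i := by
  have h : A.charpoly.coeff 0 = (-1 : ℝ) ^ n * ∏ i, hA.eigenvalues i := by
    rw [charpoly_hermitian A hA]
    exact _root_.coeff_zero_prod _
  rw [Matrix.det_eq_sign_charpoly_coeff, Fintype.card_fin, h, ← mul_assoc, ← pow_add,
    Even.neg_one_pow ⟨n, rfl⟩, one_mul]

lemma S1inv_posdef {n : ℕ} (hn : 0 < n) {A : Matrix (Fin n) (Fin n) ℝ} (hA : A.PosDef) :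
    S1inv n A = ∑ i, (hA.1.eigenvalues i)⁻¹ := by
  set d := hA.1.eigenvalues with hd
  have hdpos : ∀ i, 0 < d i := fun i => hA.eigenvalues_pos i
  have hprodpos : 0 < ∏ i, d i := Finset.prod_pos fun i _ => hdpos i
  have hnum : SmatR n ((n : ℤ) - 1) A = ∑ i : Fin n, ∏ j ∈ Finset.univ.erase i, d j := by
    unfold SmatR
    rw [if_pos ⟨by omega, by omega⟩]
    have h1 : ((n : ℤ) - 1).toNat = n - 1 := by omega
    have h2 : n - (n - 1) = 1 := by omega
    rw [h1, h2, charpoly_hermitian A hA.1, coeff_one_prod d hn, ← mul_assoc, ← pow_add,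
      Even.neg_one_pow ⟨n - 1, rfl⟩, one_mul]
  have herase : ∀ i : Fin n, ∏ j ∈ Finset.univ.erase i, d j = (∏ j, d j) * (d i)⁻¹ := by
    intro i
    rw [← Finset.mul_prod_erase Finset.univ d (Finset.mem_univ i), mul_comm (d i),
      mul_assoc, mul_inv_cancel₀ (hdpos i).ne', mul_one]
  unfold S1inv
  rw [hnum, SmatR_top, det_posdef hA.1, Finset.sum_congr rfl fun i _ => herase i,
    ← Finset.mul_sum, mul_comm, mul_div_assoc, div_self hprodpos.ne', mul_one]

lemma trace_inv_posdef {n : ℕ} {A : Matrix (Fin n) (Fin n) ℝ} (hA : A.PosDef) :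
    (A⁻¹).trace = ∑ i, (hA.1.eigenvalues i)⁻¹ := by
  have hspec := hA.1.spectral_theorem
  rw [RCLike.ofReal_real_eq_id, Function.id_comp] at hspec
  set d := hA.1.eigenvalues with hd
  have hdpos : ∀ i, 0 < d i := fun i => hA.eigenvalues_pos i
  set U : Matrix (Fin n) (Fin n) ℝ := (hA.1.eigenvectorUnitary : Matrix (Fin n) (Fin n) ℝ)
    with hU
  have h1 : U * star U = 1 := Matrix.mem_unitaryGroup_iff.mp hA.1.eigenvectorUnitary.2
  have h2 : star U * U = 1 := Matrix.mem_unitaryGroup_iff'.mp hA.1.eigenvectorUnitary.2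
  have hAinv : A⁻¹ = U * Matrix.diagonal (fun i => (d i)⁻¹) * star U := by
    apply Matrix.inv_eq_right_inv
    calc A * (U * Matrix.diagonal (fun i => (d i)⁻¹) * star U)
        = U * (Matrix.diagonal d * ((star U * U) * Matrix.diagonal fun i => (d i)⁻¹)) * star U := by
          rw [hspec, Unitary.conjStarAlgAut_apply]; simp only [Matrix.mul_assoc]; rfl
      _ = 1 := by
          rw [h2, one_mul, Matrix.diagonal_mul_diagonal]
          have : (fun i => d i * (d i)⁻¹) = fun _ : Fin n => (1 : ℝ) := by
            funext i; exact mul_inv_cancel₀ (hdpos i).ne'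
          rw [this, Matrix.diagonal_one, mul_one, h1]
  rw [hAinv, Matrix.trace_mul_comm, ← mul_assoc, h2, one_mul, Matrix.trace_diagonal]

lemma S1inv_trace {n : ℕ} {A : Matrix (Fin n) (Fin n) ℝ} (hA : A.PosDef) :
    S1inv n A = (A.det)⁻¹ * (A.adjugate).trace := by
  have hAd : (A.det)⁻¹ * (A.adjugate).trace = (A⁻¹).trace := by
    rw [Matrix.inv_def, Ring.inverse_eq_inv, Matrix.trace_smul, smul_eq_mul]
  obtain _ | m := n
  · rw [hAd]
    unfold S1inv SmatR
    norm_num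
  · rw [hAd, S1inv_posdef (Nat.succ_pos m) hA, trace_inv_posdef hA]

lemma amgm {n : ℕ} (hn : 0 < n) (z : Fin n → ℝ) (hz : ∀ i, 0 ≤ z i) :
    ∏ i, z i ≤ ((∑ i, z i) / n) ^ n := by
  have hn' : (n : ℝ) ≠ 0 := Nat.cast_ne_zero.mpr hn.ne'
  have h := Real.geom_mean_le_arith_mean_weighted Finset.univ (fun _ => (n : ℝ)⁻¹) z
    (fun i _ => by positivity)
    (by rw [Finset.sum_const, Finset.card_univ, Fintype.card_fin, nsmul_eq_mul,
      mul_inv_cancel₀ hn']) (fun i _ => hz i)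
  have hprod : ∏ i, z i = (∏ i, z i ^ ((n : ℝ)⁻¹)) ^ n := by
    rw [← Finset.prod_pow]
    refine Finset.prod_congr rfl fun i _ => ?_
    rw [← Real.rpow_natCast (z i ^ ((n:ℝ)⁻¹)) n, ← Real.rpow_mul (hz i),
      inv_mul_cancel₀ hn', Real.rpow_one]
  rw [hprod]
  have hRHS : ∑ i, (n : ℝ)⁻¹ * z i = (∑ i, z i) / n := by
    rw [← Finset.mul_sum, div_eq_inv_mul]
  calc (∏ i, z i ^ ((n : ℝ)⁻¹)) ^ n ≤ (∑ i, (n : ℝ)⁻¹ * z i) ^ n := by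
        apply pow_le_pow_left₀ (Finset.prod_nonneg fun i _ => Real.rpow_nonneg (hz i) _) h
    _ = ((∑ i, z i) / n) ^ n := by rw [hRHS]

lemma key {n : ℕ} {K ε : ℝ} (hK : 0 < K) (hε : 0 < ε) (hε' : ε < ((n : ℕ) / (K + 1) : ℝ) ^ n)
    {A : Matrix (Fin n) (Fin n) ℝ} (hA : A.PosDef) (hF : Fe n ε A < K)
    (hS : S1inv n A ≤ K + 1) : S1inv n A < K + 1 := by
  obtain _ | m := n
  · have : S1inv 0 A = 0 := by unfold S1inv SmatR; norm_num
    rw [this]; linarith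
  have hn : 0 < m + 1 := Nat.succ_pos m
  have hn' : ((m+1 : ℕ) : ℝ) ≠ 0 := Nat.cast_ne_zero.mpr hn.ne'
  have hK1 : (0 : ℝ) < K + 1 := by linarith
  set d := hA.1.eigenvalues with hd
  have hdpos : ∀ i, 0 < d i := fun i => hA.eigenvalues_pos i
  have hS1 : S1inv (m+1) A = ∑ i, (d i)⁻¹ := S1inv_posdef hn hA
  have hS1nonneg : 0 ≤ S1inv (m+1) A := by
    rw [hS1]; exact Finset.sum_nonneg fun i _ => (inv_pos.mpr (hdpos i)).le
  have hSn : Sninv (m+1) A = ∏ i, (d i)⁻¹ := by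
    rw [Sninv_eq, det_posdef hA.1, ← Finset.prod_inv_distrib]
  have hSnpos : 0 < Sninv (m+1) A := by
    rw [hSn]; exact Finset.prod_pos fun i _ => inv_pos.mpr (hdpos i)
  have hSnle : Sninv (m+1) A ≤ ((K + 1) / ((m+1:ℕ):ℝ)) ^ (m+1) := by
    rw [hSn]
    calc ∏ i, (d i)⁻¹ ≤ ((∑ i, (d i)⁻¹) / ((m+1:ℕ):ℝ)) ^ (m+1) :=
          amgm hn _ fun i => (inv_pos.mpr (hdpos i)).le
      _ ≤ ((K + 1) / ((m+1:ℕ):ℝ)) ^ (m+1) := by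
          apply pow_le_pow_left₀ (div_nonneg (Finset.sum_nonneg fun i _ =>
            (inv_pos.mpr (hdpos i)).le) (by positivity))
          apply div_le_div_of_nonneg_right ?_ (by positivity)
          · rw [← hS1]; exact hS
  have hone : (((m+1 : ℕ) : ℝ) / (K + 1)) ^ (m+1) * ((K + 1) / ((m+1:ℕ):ℝ)) ^ (m+1) = 1 := by
    rw [← mul_pow, div_mul_div_comm, mul_comm ((m+1 : ℕ) : ℝ), div_self (by positivity), one_pow]
  have hlt : ε * Sninv (m+1) A < 1 := by
    calc ε * Sninv (m+1) A ≤ ε * ((K + 1) / ((m+1:ℕ):ℝ)) ^ (m+1) :=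
          mul_le_mul_of_nonneg_left hSnle hε.le
      _ < (((m+1 : ℕ) : ℝ) / (K + 1)) ^ (m+1) * ((K + 1) / ((m+1:ℕ):ℝ)) ^ (m+1) :=
          mul_lt_mul_of_pos_right hε' (by positivity)
      _ = 1 := hone
  have : S1inv (m+1) A = Fe (m+1) ε A + ε * Sninv (m+1) A := by unfold Fe; ring
  rw [this]
  linarith

lemma contS1 {n : ℕ} : ContinuousOn
    (fun B : Matrix (Fin n) (Fin n) ℝ => (B.det)⁻¹ * B.adjugate.trace)
    {B : Matrix (Fin n) (Fin n) ℝ | B.det ≠ 0} :=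
  ((continuous_id.matrix_det).continuousOn.inv₀ fun _ hB => hB).mul
    (continuous_id.matrix_adjugate.matrix_trace).continuousOn

/-- Lemma 4.1 (2): for every `K > 0` there is `ε₀ > 0` such that for all `0 < ε < ε₀`: if
`A_t`, `t ∈ [0,1]`, is a continuous path of positive definite Hermitian matrices with
`F_ε(A_t) < K` for all `t` and `S_1(A_0⁻¹) < K`, then `S_1(A_t⁻¹) < K + 1` for all `t`.
In particular, the connected component of `{F_ε < K}` containing `{S_1(A⁻¹) < K}` is contained
in `{S_1(A⁻¹) < K + 1}`. -/
theorem statement10 (n : ℕ) (K : ℝ) (hK : 0 < K) :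
    ∃ ε₀ > 0, ∀ ε : ℝ, 0 < ε → ε < ε₀ →
      (∀ A : ℝ → Matrix (Fin n) (Fin n) ℝ, ContinuousOn A (Set.Icc 0 1) →
        (∀ t ∈ Set.Icc (0 : ℝ) 1, (A t).PosDef) →
        (∀ t ∈ Set.Icc (0 : ℝ) 1, Fe n ε (A t) < K) →
        S1inv n (A 0) < K →
        ∀ t ∈ Set.Icc (0 : ℝ) 1, S1inv n (A t) < K + 1) ∧
      (∀ A₀ : Matrix (Fin n) (Fin n) ℝ, A₀.PosDef → S1inv n A₀ < K →
        connectedComponentIn {A : Matrix (Fin n) (Fin n) ℝ | A.PosDef ∧ Fe n ε A < K} A₀ ⊆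
          {A : Matrix (Fin n) (Fin n) ℝ | S1inv n A < K + 1}) := by
  refine ⟨((n : ℕ) / (K + 1) : ℝ) ^ n, ?_, fun ε hε hε' => ⟨?_, ?_⟩⟩
  · obtain _ | m := n
    · norm_num
    · exact pow_pos (div_pos (by positivity) (by linarith)) _
  · intro A hcont hposd hF h0 t ht
    by_contra hcon
    push_neg at hcon
    have hgc : ContinuousOn (fun s => S1inv n (A s)) (Set.Icc 0 1) := by
      have h1 : ContinuousOn (fun s => ((A s).det)⁻¹ * (A s).adjugate.trace) (Set.Icc 0 1) :=
        contS1.comp hcont fun s hs => (hposd s hs).det_pos.ne'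
      exact h1.congr fun s hs => S1inv_trace (hposd s hs)
    have h0m : (0 : ℝ) ∈ Set.Icc (0 : ℝ) 1 := Set.left_mem_Icc.mpr zero_le_one
    have hiv := (isPreconnected_Icc).intermediate_value h0m ht hgc
    obtain ⟨s, hs, hgs⟩ := hiv ⟨by linarith, hcon⟩
    have hgs' : S1inv n (A s) = K + 1 := hgs
    have hk := key hK hε hε' (hposd s hs) (hF s hs) (le_of_eq hgs')
    rw [hgs'] at hk
    exact lt_irrefl _ hk
  · intro A₀ hA₀ hS0 B hB
    set S := {A : Matrix (Fin n) (Fin n) ℝ | A.PosDef ∧ Fe n ε A < K} with hSdef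
    have hA₀S : A₀ ∈ S := by
      refine ⟨hA₀, ?_⟩
      have h1 : Sninv n A₀ = (A₀.det)⁻¹ := Sninv_eq A₀
      have hdet : 0 < A₀.det := hA₀.det_pos
      have h2 : 0 < ε * Sninv n A₀ := mul_pos hε (by rw [h1]; positivity)
      unfold Fe
      linarith
    have hsub : connectedComponentIn S A₀ ⊆ S := connectedComponentIn_subset S A₀
    have hpre : IsPreconnected (connectedComponentIn S A₀) :=
      isPreconnected_connectedComponentIn
    have hgc : ContinuousOn (fun B => S1inv n B) (connectedComponentIn S A₀) :=
      (contS1.mono fun B hB => (hsub hB).1.det_pos.ne').congr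
        fun B hB => S1inv_trace (hsub hB).1
    by_contra hcon
    simp only [Set.mem_setOf_eq, not_lt] at hcon
    have hA₀mem : A₀ ∈ connectedComponentIn S A₀ := mem_connectedComponentIn hA₀S
    obtain ⟨B', hB', hgB'⟩ := hpre.intermediate_value hA₀mem hB hgc ⟨by linarith, hcon⟩
    have hgB : S1inv n B' = K + 1 := hgB'
    have hk := key hK hε hε' (hsub hB').1 (hsub hB').2 (le_of_eq hgB)
    rw [hgB] at hk
    exact lt_irrefl _ hk
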